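/- (Reduction to the Adler–Yamilov system.) Let p, q : ℤ × ℤ → ℂ, α : ℤ → ℂ, β : ℤ → ℂ, and use the shift notation h_{ij}(n,m) = h(n+i, m+j). Suppose that for all (n,m): 1 + p q₁₁ ≠ 0, p₀₁ = (q₁₀ p² + (g₁₀ − f) p + p₁₀)/(1 + p q₁₁) and q₀₁ = (p₁₀ q₁₁² + (f − g₁₀) q₁₁ + q₁₀)/(1 + p q₁₁), where f(n,m) = α(n) + p q₁₀ and g₁₀(n,m) = β(m) + p₁₀ q₁₁. Then for all (n,m): p₀₁ = p₁₀ − (α(n) − β(m)) p/(1 + p q₁₁) and q₀₁ = q₁₀ + (α(n) − β(m)) q₁₁/(1 + p q₁₁). -/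

import Mathlib

/-- Reduction of the discrete NLS system to the non-autonomous Adler–Yamilov
system, using the first integrals `f = α(n) + p q₁₀` and `g₁₀ = β(m) + p₁₀ q₁₁`. -/
theorem stmt_11 (p q : ℤ × ℤ → ℂ) (α β : ℤ → ℂ)
    (hne : ∀ n m : ℤ, 1 + p (n, m) * q (n + 1, m + 1) ≠ 0)
    (h1 : ∀ n m : ℤ, p (n, m + 1) =
      (q (n + 1, m) * (p (n, m)) ^ 2
          + ((β m + p (n + 1, m) * q (n + 1, m + 1)) - (α n + p (n, m) * q (n + 1, m)))
            * p (n, m)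
          + p (n + 1, m))
        / (1 + p (n, m) * q (n + 1, m + 1)))
    (h2 : ∀ n m : ℤ, q (n, m + 1) =
      (p (n + 1, m) * (q (n + 1, m + 1)) ^ 2
          + ((α n + p (n, m) * q (n + 1, m)) - (β m + p (n + 1, m) * q (n + 1, m + 1)))
            * q (n + 1, m + 1)
          + q (n + 1, m))
        / (1 + p (n, m) * q (n + 1, m + 1))) :
    ∀ n m : ℤ,
      p (n, m + 1) = p (n + 1, m)
        - (α n - β m) * p (n, m) / (1 + p (n, m) * q (n + 1, m + 1)) ∧
      q (n, m + 1) = q (n + 1, m)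
        + (α n - β m) * q (n + 1, m + 1) / (1 + p (n, m) * q (n + 1, m + 1)) := by
  intro n m
  constructor
  · rw [h1 n m]
    have h := hne n m
    field_simp
    ring
  · rw [h2 n m]
    have h := hne n m
    rw [div_eq_iff h, add_mul, div_mul_cancel₀ _ h]
    ring
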